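/- Let K be a field and A a positively graded, connected K-algebra (A is ℕ-graded with A₀ = K). Let M be a graded A-module with Mₙ = 0 for n < 0 and with Mₙ a finite-dimensional K-vector space for every n ≥ 0. Let x be a homogeneous element of positive degree in the maximal ideal of A which operates injectively on M by multiplication. Then M is a free K[x]-module, where K[x] is the (polynomial) subalgebra of A generated by x. -/

import Mathlib

/-!
Statement 2 (Lemma 3 of Bui–Rahm).  Let `K` be a field and `A` a positively graded,
connected `K`-algebra (`A` is `ℕ`-graded with `A₀ = K`).  Let `M` be a graded `A`-module
with `Mₙ = 0` for `n < 0` and each `Mₙ` finite dimensional over `K`.  If a homogeneous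
element `x` of positive degree acts injectively on `M` by multiplication, then `M`
is a free module over the polynomial subalgebra `K[x]` of `A` generated by `x`
(`M` is viewed as a `K[X]`-module via evaluation of polynomials at `x`).
-/


open Polynomial Finset

private lemma BR_relCompl {K V : Type*} [Field K] [AddCommGroup V] [Module K V]
    {p q : Submodule K V} (h : p ≤ q) :
    ∃ r : Submodule K V, r ≤ q ∧ p ⊓ r = ⊥ ∧ p ⊔ r = q := by
  obtain ⟨r', hr'⟩ := Submodule.exists_isCompl (Submodule.comap q.subtype p)
  have hp : p = Submodule.map q.subtype (Submodule.comap q.subtype p) := by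
    rw [Submodule.map_comap_subtype, inf_eq_right.mpr h]
  refine ⟨r'.map q.subtype, Submodule.map_subtype_le q r', ?_, ?_⟩
  · rw [hp, ← Submodule.map_inf _ (Submodule.injective_subtype q), hr'.inf_eq_bot,
      Submodule.map_bot]
  · rw [hp, ← Submodule.map_sup, hr'.sup_eq_top, Submodule.map_top, Submodule.range_subtype]

private lemma BR_directness {K A M : Type} [Field K] [Ring A] [Algebra K A]
    [AddCommGroup M] [Module K M] [Module A M] [IsScalarTower K A M]
    (ℳ : ℤ → Submodule K M) (d : ℕ) (x : A)
    (hpow : ∀ (n : ℕ) (q : ℤ) (v : M), v ∈ ℳ q → x ^ n • v ∈ ℳ ((n : ℤ) * d + q))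
    (hinj : Function.Injective (fun v : M => x • v))
    (C : ℤ → Submodule K M) (hC1 : ∀ m, C m ≤ ℳ m)
    (hC2 : ∀ (m : ℤ) (v : M), v ∈ C m → (∃ w ∈ ℳ (m - d), v = x • w) → v = 0) :
    ∀ (N : ℕ) (m : ℤ) (c : ℕ → M), (∀ j : ℕ, c j ∈ C (m - (j : ℤ) * d)) →
      (∑ j ∈ Finset.range N, x ^ j • c j) = 0 → ∀ j < N, c j = 0 := by
  intro N
  induction N with
  | zero => intro m c _ _ j hj; exact absurd hj (Nat.not_lt_zero j)
  | succ N ih =>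
    intro m c hc hsum j hj
    set w : M := ∑ jj ∈ Finset.range N, x ^ jj • c (jj + 1) with hw_def
    have hwmem : w ∈ ℳ (m - d) := by
      refine Submodule.sum_mem _ (fun jj _ => ?_)
      have h2 := hC1 _ (hc (jj + 1))
      have e2 : m - (↑(jj + 1) : ℤ) * d = m - ((jj : ℤ) + 1) * d := by push_cast; ring
      rw [e2] at h2
      have h1 := hpow jj (m - ((jj : ℤ) + 1) * d) (c (jj + 1)) h2
      have e1 : (jj : ℤ) * d + (m - ((jj : ℤ) + 1) * d) = m - d := by ring
      rwa [e1] at h1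
    have hsum' : (∑ jj ∈ Finset.range N, x ^ (jj + 1) • c (jj + 1)) + c 0 = 0 := by
      have h := Finset.sum_range_succ' (fun j => x ^ j • c j) N
      rw [hsum] at h
      simpa using h.symm
    have hxw : ∑ jj ∈ Finset.range N, x ^ (jj + 1) • c (jj + 1) = x • w := by
      rw [hw_def, Finset.smul_sum]
      refine Finset.sum_congr rfl fun jj _ => ?_
      rw [pow_succ', mul_smul]
    have hc0 : c 0 = x • (-w) := by
      rw [smul_neg]
      exact eq_neg_of_add_eq_zero_right (by rw [← hxw]; exact hsum')
    have hc0mem : c 0 ∈ C m := by simpa using hc 0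
    have hc0z : c 0 = 0 := hC2 m (c 0) hc0mem ⟨-w, neg_mem hwmem, hc0⟩
    have hwz : w = 0 := by
      have hx0 : x • w = 0 := by
        rw [← hxw]
        rw [hc0z, add_zero] at hsum'
        exact hsum'
      have h0 : (fun v : M => x • v) w = (fun v : M => x • v) 0 := by
        simpa [smul_zero] using hx0
      exact hinj h0
    have hres := ih (m - d) (fun j => c (j + 1)) ?_ ?_
    · cases j with
      | zero => exact hc0z
      | succ j' => exact hres j' (by omega)
    · intro j'
      have h2 := hc (j' + 1)
      have e2 : m - (↑(j' + 1) : ℤ) * d = m - d - (j' : ℤ) * d := by push_cast; ring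
      rwa [e2] at h2
    · exact hwz

private lemma BR_spanning {K A M : Type} [Field K] [Ring A] [Algebra K A]
    [AddCommGroup M] [Module K M] [Module A M] [IsScalarTower K A M]
    (ℳ : ℤ → Submodule K M) (d : ℕ) (hd : 0 < d) (x : A)
    (hneg : ∀ q : ℤ, q < 0 → ℳ q = ⊥)
    (isTop : (⨆ m, ℳ m) = ⊤)
    (C : ℤ → Submodule K M)
    (hC3 : ∀ (m : ℤ) (v : M), v ∈ ℳ m → ∃ w ∈ ℳ (m - d), ∃ c ∈ C m, v = x • w + c)
    (P : Submodule K M)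
    (hP1 : ∀ (m : ℤ) (c : M), c ∈ C m → c ∈ P)
    (hP2 : ∀ v ∈ P, x • v ∈ P) :
    ∀ v : M, v ∈ P := by
  have key : ∀ (N : ℕ) (m : ℤ), m < N → ℳ m ≤ P := by
    intro N
    induction N with
    | zero =>
      intro m hm
      rw [hneg m (by exact_mod_cast hm)]
      exact bot_le
    | succ N ih =>
      intro m hm v hv
      by_cases hmN : m < N
      · exact ih m hmN hv
      · obtain ⟨w, hw, c, hcm, rfl⟩ := hC3 m v hv
        have hmd : m - d < N := by omega
        exact P.add_mem (hP2 w (ih (m - d) hmd hw)) (hP1 m c hcm)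
  intro v
  have hv : v ∈ ⨆ m, ℳ m := by rw [isTop]; trivial
  exact (iSup_le fun m => key (m.toNat + 1) m (by omega)) hv

theorem free_over_polynomial_subalgebra_of_injective_smul
    (K : Type) [Field K] (A : Type) [Ring A] [Algebra K A]
    (𝒜 : ℕ → Submodule K A) [GradedAlgebra 𝒜]
    (hconn : 𝒜 0 = (1 : Submodule K A))
    (M : Type) [AddCommGroup M] [Module K M] [Module A M] [IsScalarTower K A M]
    (ℳ : ℤ → Submodule K M) [DirectSum.Decomposition ℳ]
    (hgraded : ∀ (p : ℕ) (q : ℤ) (a : A) (v : M), a ∈ 𝒜 p → v ∈ ℳ q → a • v ∈ ℳ (p + q))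
    (hneg : ∀ q : ℤ, q < 0 → ℳ q = ⊥)
    (hfin : ∀ q : ℤ, FiniteDimensional K (ℳ q))
    (d : ℕ) (hd : 0 < d) (x : A) (hx : x ∈ 𝒜 d)
    (hinj : Function.Injective (fun v : M => x • v)) :
    letI : Module (Polynomial K) M := Module.compHom M (Polynomial.aeval x).toRingHom
    Module.Free (Polynomial K) M := by
  classical
  letI instR : Module (Polynomial K) M := Module.compHom M (Polynomial.aeval x).toRingHom
  show Module.Free (Polynomial K) M
  have hsmulR : ∀ (p : Polynomial K) (v : M), p • v = (Polynomial.aeval x p) • v :=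
    fun _ _ => rfl
  letI instT : IsScalarTower K (Polynomial K) M := by
    constructor
    intro k p v
    show (Polynomial.aeval x (k • p)) • v = k • ((Polynomial.aeval x p) • v)
    rw [map_smul, smul_assoc]
  have hcomm : ∀ (a : A) (k : K) (v : M), a • (k • v) = k • (a • v) := by
    intro a k v
    rw [← IsScalarTower.algebraMap_smul A k v, ← mul_smul, ← Algebra.commutes, mul_smul,
      IsScalarTower.algebraMap_smul]
  let L : M →ₗ[K] M :=
    { toFun := fun v => x • v
      map_add' := smul_add x
      map_smul' := fun k v => hcomm x k v }
  have hpow : ∀ (n : ℕ) (q : ℤ) (v : M), v ∈ ℳ q → x ^ n • v ∈ ℳ ((n : ℤ) * d + q) := by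
    intro n q v hv
    have hxp : x ^ n ∈ 𝒜 (n * d) := by
      simpa [smul_eq_mul] using SetLike.pow_mem_graded n hx
    have h1 := hgraded (n * d) q (x ^ n) v hxp hv
    have e1 : ((n * d : ℕ) : ℤ) + q = (n : ℤ) * d + q := by push_cast; ring
    rwa [e1] at h1
  have hXle : ∀ m : ℤ, Submodule.map L (ℳ (m - d)) ≤ ℳ m := by
    intro m v hv
    obtain ⟨w, hw, rfl⟩ := hv
    have h1 := hgraded d (m - d) x w hx hw
    have e1 : ((d : ℕ) : ℤ) + (m - d) = m := by ring
    rwa [e1] at h1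
  choose C hCle hCinf hCsup using fun m : ℤ => BR_relCompl (hXle m)
  have hC2 : ∀ (m : ℤ) (v : M), v ∈ C m → (∃ w ∈ ℳ (m - d), v = x • w) → v = 0 := by
    rintro m v hvC ⟨w, hw, rfl⟩
    have hmem : x • w ∈ Submodule.map L (ℳ (m - d)) ⊓ C m := ⟨⟨w, hw, rfl⟩, hvC⟩
    rw [hCinf m] at hmem
    simpa using hmem
  have hC3 : ∀ (m : ℤ) (v : M), v ∈ ℳ m → ∃ w ∈ ℳ (m - d), ∃ c ∈ C m, v = x • w + c := by
    intro m v hv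
    rw [← hCsup m] at hv
    obtain ⟨y, hy, z, hz, rfl⟩ := Submodule.mem_sup.mp hv
    obtain ⟨w, hw, rfl⟩ := hy
    exact ⟨w, hw, z, hz, rfl⟩
  -- bases of the complements
  let bC : ∀ m : ℤ, Module.Basis (Module.Basis.ofVectorSpaceIndex K (C m)) K (C m) :=
    fun m => Module.Basis.ofVectorSpace K (C m)
  let g : ∀ m : ℤ, Module.Basis.ofVectorSpaceIndex K (C m) → M := fun m i => (bC m i : M)
  let f : (Σ m : ℤ, Module.Basis.ofVectorSpaceIndex K (C m)) → M := fun σ => g σ.1 σ.2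
  have hfC : ∀ σ, f σ ∈ C σ.1 := fun σ => (bC σ.1 σ.2).2
  have hindep : ∀ m : ℤ, LinearIndependent K (g m) := fun m =>
    (bC m).linearIndependent.map' (C m).subtype (Submodule.ker_subtype (C m))
  have hspanC : ∀ m : ℤ, Submodule.span K (Set.range (g m)) = C m := by
    intro m
    have h1 : Set.range (g m) = (C m).subtype '' (Set.range (bC m)) := by
      rw [← Set.range_comp]; rfl
    rw [h1, ← Submodule.map_span, (bC m).span_eq, Submodule.map_top, Submodule.range_subtype]
  have hsupIndep : iSupIndep C :=
    ((DirectSum.Decomposition.isInternal ℳ).submodule_iSupIndep).mono hCle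
  have LIK : LinearIndependent K f := by
    apply linearIndependent_iUnion_finite (f := g) hindep
    intro i t _ hit
    rw [hspanC i]
    refine (hsupIndep i).mono_right ?_
    refine iSup_le fun j => iSup_le fun hj => ?_
    rw [hspanC j]
    exact le_iSup_of_le j (le_iSup_of_le (fun h => hit (h ▸ hj)) le_rfl)
  -- projections
  let proj : ℤ → M →ₗ[K] M := fun m =>
    (ℳ m).subtype ∘ₗ (DFinsupp.lapply m) ∘ₗ (DirectSum.decomposeLinearEquiv ℳ).toLinearMap
  have proj_same : ∀ (m : ℤ) (v : M), v ∈ ℳ m → proj m v = v := by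
    intro m v hv
    exact DirectSum.decompose_of_mem_same ℳ hv
  have proj_ne : ∀ (m q : ℤ) (v : M), v ∈ ℳ q → q ≠ m → proj m v = 0 := by
    intro m q v hv hq
    exact DirectSum.decompose_of_mem_ne ℳ hv hq
  refine Module.Free.of_basis (Module.Basis.mk (v := f) ?_ ?_)
  · -- linear independence over K[X]
    rw [linearIndependent_iff]
    intro l hl
    set N := (l.support.sup fun σ => (l σ).natDegree) + 1 with hN
    have hdeg : ∀ σ ∈ l.support, (l σ).natDegree < N := fun σ hσ =>
      Nat.lt_succ_of_le (Finset.le_sup (f := fun σ => (l σ).natDegree) hσ)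
    rw [Finsupp.linearCombination_apply, Finsupp.sum] at hl
    have hterm : ∀ σ ∈ l.support,
        l σ • f σ = ∑ n ∈ Finset.range N, (l σ).coeff n • (x ^ n • f σ) := by
      intro σ hσ
      rw [hsmulR, Polynomial.aeval_eq_sum_range' (hdeg σ hσ), Finset.sum_smul]
      exact Finset.sum_congr rfl fun n _ => smul_assoc _ _ _
    rw [Finset.sum_congr rfl hterm] at hl
    have key : ∀ (σ0 : Σ m : ℤ, Module.Basis.ofVectorSpaceIndex K (C m)), ∀ n0 : ℕ,
        σ0 ∈ l.support → n0 < N → (l σ0).coeff n0 = 0 := by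
      intro σ0 n0 hσ0 hn0
      set m : ℤ := (n0 : ℤ) * d + σ0.1 with hm
      have hproj := congrArg (proj m) hl
      rw [map_sum, map_zero] at hproj
      have hterm2 : ∀ σ ∈ l.support,
          proj m (∑ n ∈ Finset.range N, (l σ).coeff n • (x ^ n • f σ))
            = ∑ n ∈ Finset.range N,
                (if σ.1 = m - (n : ℤ) * d then (l σ).coeff n • (x ^ n • f σ) else 0) := by
        intro σ hσ
        rw [map_sum]
        refine Finset.sum_congr rfl fun n _ => ?_
        rw [map_smul]
        have hmem : x ^ n • f σ ∈ ℳ ((n : ℤ) * d + σ.1) :=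
          hpow n σ.1 (f σ) (hCle σ.1 (hfC σ))
        by_cases h : σ.1 = m - (n : ℤ) * d
        · rw [if_pos h, proj_same m _ (by rwa [show (n : ℤ) * d + σ.1 = m by omega] at hmem)]
        · rw [if_neg h, proj_ne m _ _ hmem (by omega), smul_zero]
      rw [Finset.sum_congr rfl hterm2, Finset.sum_comm] at hproj
      set c : ℕ → M := fun n =>
        ∑ σ ∈ l.support.filter (fun σ => σ.1 = m - (n : ℤ) * d), (l σ).coeff n • f σ with hc_def
      have hproj2 : ∑ n ∈ Finset.range N, x ^ n • c n = 0 := by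
        rw [← hproj]
        refine Finset.sum_congr rfl fun n _ => ?_
        rw [hc_def, Finset.smul_sum, Finset.sum_filter]
        refine Finset.sum_congr rfl fun σ _ => ?_
        by_cases h : σ.1 = m - (n : ℤ) * d
        · rw [if_pos h, if_pos h, ← hcomm]
        · rw [if_neg h, if_neg h]
      have hcC : ∀ n : ℕ, c n ∈ C (m - (n : ℤ) * d) := by
        intro n
        refine Submodule.sum_mem _ fun σ hσ => Submodule.smul_mem _ _ ?_
        have := hfC σ
        rwa [(Finset.mem_filter.mp hσ).2] at this
      have hzero := BR_directness ℳ d x hpow hinj C hCle hC2 N m c hcC hproj2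
      have hcz := hzero n0 hn0
      have hσ0f : σ0 ∈ l.support.filter (fun σ => σ.1 = m - (n0 : ℤ) * d) :=
        Finset.mem_filter.mpr ⟨hσ0, by omega⟩
      exact linearIndependent_iff'.mp LIK _ (fun σ => (l σ).coeff n0) hcz σ0 hσ0f
    ext σ n
    by_cases hσ : σ ∈ l.support
    · by_cases hn : n < N
      · simpa using key σ n hσ hn
      · simp [Polynomial.coeff_eq_zero_of_natDegree_lt (lt_of_lt_of_le (hdeg σ hσ) (le_of_not_gt hn))]
    · simp [Finsupp.notMem_support_iff.mp hσ]
  · -- spanning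
    intro v _
    let P : Submodule K M := (Submodule.span (Polynomial K) (Set.range f)).restrictScalars K
    have hP1 : ∀ (m : ℤ) (cc : M), cc ∈ C m → cc ∈ P := by
      intro m cc hcc
      rw [← hspanC m] at hcc
      refine Submodule.span_le.mpr ?_ hcc
      rintro y ⟨i, rfl⟩
      exact Submodule.subset_span ⟨⟨m, i⟩, rfl⟩
    have hP2 : ∀ w ∈ P, x • w ∈ P := by
      intro w hw
      have h1 : (Polynomial.X : Polynomial K) • w ∈
          Submodule.span (Polynomial K) (Set.range f) := Submodule.smul_mem _ _ hw
      have h2 : (Polynomial.X : Polynomial K) • w = x • w := by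
        rw [hsmulR, Polynomial.aeval_X]
      rwa [h2] at h1
    exact BR_spanning ℳ d hd x hneg
      (DirectSum.Decomposition.isInternal ℳ).submodule_iSup_eq_top C hC3 P hP1 hP2 v
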